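/- Non-asymptotic lower bound for description-length regularization (structural risk minimization): let P be a full-support probability mass function on the finite set of d-policies, let δ ∈ (0,1), and define reg(π) := √((−2·log₂ P(π) + log₂ e + log₂(1/δ))/(2N)). Let π_SRM be a maximizer over all d-policies of α_train(π;π*) − reg(π). Then for every probability mass function Q on d-policies, with probability at least 1−δ over the i.i.d. uniform draw of the training contexts: α(π_SRM;π*) ≥ max over d-policies π of (α(π;π*) − 2·reg(π)) ≥ E_{π∼Q}[α(π;π*)] − √(2/N)·E_{π∼Q}[√(−2·log₂ P(π) + log₂ e + log₂(1/δ))]. -/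

import Mathlib

open Finset

variable {S β : Type} [Fintype S] [DecidableEq S] [DecidableEq β]

/-- Accuracy of a d-policy `π` w.r.t. the ground truth `πs`. -/
noncomputable def accuracy (A : S → Finset β) (π πs : ∀ s : S, {a : β // a ∈ A s}) : ℝ :=
  (∑ s : S, if π s = πs s then (1 : ℝ) else 0) / (Fintype.card S : ℝ)

/-- Training accuracy of a d-policy `π` on the training contexts `shat`. -/
noncomputable def trainAccuracy (A : S → Finset β) {N : ℕ} (shat : Fin N → S)
    (π πs : ∀ s : S, {a : β // a ∈ A s}) : ℝ :=
  (∑ i : Fin N, if π (shat i) = πs (shat i) then (1 : ℝ) else 0) / (N : ℝ)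

/-- The description-length regularizer
`reg(π) = √((−2 log₂ P(π) + log₂ e + log₂(1/δ))/(2N))`. -/
noncomputable def reg (A : S → Finset β) (P : (∀ s : S, {a : β // a ∈ A s}) → ℝ)
    (δ : ℝ) (N : ℕ) (π : ∀ s : S, {a : β // a ∈ A s}) : ℝ :=
  Real.sqrt ((-2 * Real.logb 2 (P π) + Real.logb 2 (Real.exp 1) +
    Real.logb 2 (1 / δ)) / (2 * (N : ℝ)))


lemma key_ineq {p : ℝ} (hp0 : 0 ≤ p) (hp1 : p ≤ 1) (l : ℝ) :
    1 - p + p * Real.exp l ≤ Real.exp (l * p + l ^ 2 / 8) := by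
  set D : ℝ → ℝ := fun x => 1 - p + p * Real.exp x with hDdef
  have hD : ∀ x, 0 < D x := by
    intro x
    have hE := Real.exp_pos x
    have h1 : 0 ≤ p * Real.exp x := mul_nonneg hp0 hE.le
    simp only [hDdef]
    nlinarith [mul_nonneg (sub_nonneg.2 hp1) hE.le]
  have hDd : ∀ x, HasDerivAt D (p * Real.exp x) x := by
    intro x
    exact ((Real.hasDerivAt_exp x).const_mul p).const_add (1 - p)
  have hLd : ∀ x, HasDerivAt (fun x => Real.log (D x)) (p * Real.exp x / D x) x :=
    fun x => (hDd x).log (hD x).ne'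
  set g : ℝ → ℝ := fun x => p + x / 4 - p * Real.exp x / D x with hgdef
  have hgd : ∀ x, HasDerivAt g
      (1/4 - (p * Real.exp x * D x - p * Real.exp x * (p * Real.exp x)) / (D x)^2) x := by
    intro x
    have h1 : HasDerivAt (fun x => p * Real.exp x / D x)
        ((p * Real.exp x * D x - p * Real.exp x * (p * Real.exp x)) / (D x)^2) x :=
      ((Real.hasDerivAt_exp x).const_mul p).div (hDd x) (hD x).ne'
    have h2 : HasDerivAt (fun x : ℝ => p + x / 4) (1/4) x := by
      simpa using ((hasDerivAt_id x).div_const 4).const_add p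
    exact h2.sub h1
  have hgmono : Monotone g := by
    refine monotone_of_deriv_nonneg (fun x => (hgd x).differentiableAt) ?_
    intro x
    rw [(hgd x).deriv]
    have hDx := hD x
    rw [sub_nonneg, div_le_iff₀ (by positivity)]
    have hE := Real.exp_pos x
    nlinarith [sq_nonneg ((1 - p) - p * Real.exp x), hDx]
  have hg0 : g 0 = 0 := by
    simp [hgdef, hDdef, Real.exp_zero]
  set f : ℝ → ℝ := fun x => x * p + x^2/8 - Real.log (D x) with hfdef
  have hfd : ∀ x, HasDerivAt f (g x) x := by
    intro x
    have h1 : HasDerivAt (fun x : ℝ => x * p + x^2/8) (p + x/4) x := by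
      have := ((hasDerivAt_pow 2 x).div_const 8).const_add (x * p)
      have h2 := ((hasDerivAt_id x).mul_const p).add ((hasDerivAt_pow 2 x).div_const 8)
      exact h2.congr_deriv (by norm_num; ring)
    have := h1.sub (hLd x)
    exact this
  have hf0 : f 0 = 0 := by simp [hfdef, hDdef]
  have hfnonneg : ∀ x, 0 ≤ f x := by
    intro x
    have hcont : Continuous f := by
      have : Differentiable ℝ f := fun x => (hfd x).differentiableAt
      exact this.continuous
    rcases le_or_gt 0 x with hx | hx
    · have hm : MonotoneOn f (Set.Ici 0) := by
        refine monotoneOn_of_deriv_nonneg (convex_Ici 0) hcont.continuousOn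
          (fun y _ => ((hfd y).differentiableAt).differentiableWithinAt) ?_
        intro y hy
        rw [interior_Ici] at hy
        rw [(hfd y).deriv]
        have := hgmono (le_of_lt hy)
        rw [hg0] at this
        exact this
      have := hm (Set.self_mem_Ici) (Set.mem_Ici.2 hx) hx
      rw [hf0] at this; exact this
    · have hm : AntitoneOn f (Set.Iic 0) := by
        refine antitoneOn_of_deriv_nonpos (convex_Iic 0) hcont.continuousOn
          (fun y _ => ((hfd y).differentiableAt).differentiableWithinAt) ?_
        intro y hy
        rw [interior_Iic] at hy
        rw [(hfd y).deriv]
        have := hgmono (le_of_lt hy)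
        rw [hg0] at this
        exact this
      have := hm (Set.mem_Iic.2 hx.le) (Set.self_mem_Iic) hx.le
      rw [hf0] at this; exact this
  have hfl := hfnonneg l
  have : Real.log (D l) ≤ l * p + l^2/8 := by
    simp only [hfdef] at hfl; linarith
  have := (Real.log_le_iff_le_exp (hD l)).1 this
  simpa [hDdef] using this

lemma mgf_bound {T : Type} [Fintype T] [Nonempty T] (g : T → ℝ)
    (hg : ∀ s, g s = 0 ∨ g s = 1) (l : ℝ) :
    ∑ s : T, Real.exp (l * (g s - (∑ t : T, g t) / (Fintype.card T : ℝ))) ≤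
      (Fintype.card T : ℝ) * Real.exp (l ^ 2 / 8) := by
  set M : ℝ := (Fintype.card T : ℝ) with hMdef
  have hM : 0 < M := by
    simp only [hMdef]
    exact_mod_cast Fintype.card_pos
  set k : ℝ := ∑ t : T, g t with hkdef
  have hk0 : 0 ≤ k := Finset.sum_nonneg fun t _ => by rcases hg t with h | h <;> simp [h]
  have hkM : k ≤ M := by
    have : ∀ t ∈ univ, g t ≤ 1 := fun t _ => by rcases hg t with h | h <;> simp [h]
    calc k ≤ ∑ _t : T, (1:ℝ) := Finset.sum_le_sum this
    _ = M := by simp [hMdef]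
  set p : ℝ := k / M with hpdef
  have hp0 : 0 ≤ p := div_nonneg hk0 hM.le
  have hp1 : p ≤ 1 := (div_le_one hM).2 hkM
  have hsum : ∑ s : T, Real.exp (l * g s) = M - k + k * Real.exp l := by
    have : ∀ s : T, Real.exp (l * g s) = (1 - g s) + g s * Real.exp l := by
      intro s; rcases hg s with h | h <;> simp [h]
    rw [Finset.sum_congr rfl (fun s _ => this s)]
    rw [Finset.sum_add_distrib, Finset.sum_sub_distrib, ← Finset.sum_mul]
    simp [hMdef, hkdef]
  have hfact : ∀ s : T, Real.exp (l * (g s - k / M)) = Real.exp (-(l * p)) * Real.exp (l * g s) := by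
    intro s
    rw [← Real.exp_add]
    congr 1
    simp only [hpdef]
    ring
  calc ∑ s : T, Real.exp (l * (g s - k / M))
      = Real.exp (-(l * p)) * (M - k + k * Real.exp l) := by
        rw [Finset.sum_congr rfl (fun s _ => hfact s), ← Finset.mul_sum, hsum]
    _ = Real.exp (-(l * p)) * (M * (1 - p + p * Real.exp l)) := by
        congr 1
        rw [hpdef]; field_simp
    _ ≤ Real.exp (-(l * p)) * (M * Real.exp (l * p + l ^ 2 / 8)) := by
        have := key_ineq hp0 hp1 l
        have h1 : (0:ℝ) ≤ Real.exp (-(l * p)) := (Real.exp_pos _).le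
        apply mul_le_mul_of_nonneg_left _ h1
        exact mul_le_mul_of_nonneg_left this hM.le
    _ = M * Real.exp (l ^ 2 / 8) := by
        rw [← mul_assoc, mul_comm (Real.exp _) M, mul_assoc, ← Real.exp_add]
        ring_nf

open scoped Classical in
lemma chernoff {T : Type} [Fintype T] (h : T → ℝ) {N : ℕ} (l a : ℝ) (hl : 0 ≤ l) :
    ((univ.filter (fun x : Fin N → T => a ≤ ∑ i, h (x i))).card : ℝ) * Real.exp (l * a) ≤
      (∑ s : T, Real.exp (l * h s)) ^ N := by
  calc ((univ.filter (fun x : Fin N → T => a ≤ ∑ i, h (x i))).card : ℝ) * Real.exp (l * a)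
      = ∑ _x ∈ univ.filter (fun x : Fin N → T => a ≤ ∑ i, h (x i)), Real.exp (l * a) := by
        rw [Finset.sum_const, nsmul_eq_mul]
    _ ≤ ∑ x ∈ univ.filter (fun x : Fin N → T => a ≤ ∑ i, h (x i)),
          Real.exp (l * ∑ i, h (x i)) := by
        refine Finset.sum_le_sum fun x hx => ?_
        exact Real.exp_le_exp.2 (mul_le_mul_of_nonneg_left (Finset.mem_filter.1 hx).2 hl)
    _ ≤ ∑ x : Fin N → T, Real.exp (l * ∑ i, h (x i)) :=
        Finset.sum_le_sum_of_subset_of_nonneg (Finset.filter_subset _ _)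
          (fun _ _ _ => (Real.exp_pos _).le)
    _ = ∑ x : Fin N → T, ∏ i : Fin N, Real.exp (l * h (x i)) := by
        refine Finset.sum_congr rfl fun x _ => ?_
        rw [← Real.exp_sum, Finset.mul_sum]
    _ = ∏ _i : Fin N, ∑ s : T, Real.exp (l * h s) := by
        rw [Finset.prod_univ_sum]
        rw [Fintype.piFinset_univ]
    _ = (∑ s : T, Real.exp (l * h s)) ^ N := by
        rw [Finset.prod_const, Finset.card_univ, Fintype.card_fin]

open scoped Classical in
lemma tail_count {T : Type} [Fintype T] [Nonempty T] (g : T → ℝ)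
    (hg : ∀ s, g s = 0 ∨ g s = 1) {N : ℕ} (ε : ℝ) (hε : 0 ≤ ε) (c : ℝ) (hc : c = 1 ∨ c = -1) :
    ((univ.filter (fun x : Fin N → T =>
        (N : ℝ) * ε ≤ ∑ i, c * (g (x i) - (∑ t : T, g t) / (Fintype.card T : ℝ)))).card : ℝ) ≤
      Real.exp (-(2 * N * ε ^ 2)) * (Fintype.card T : ℝ) ^ N := by
  have hc2 : c ^ 2 = 1 := by rcases hc with h | h <;> simp [h]
  set M : ℝ := (Fintype.card T : ℝ) with hMdef
  have hM : 0 < M := by simp only [hMdef]; exact_mod_cast Fintype.card_pos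
  set h : T → ℝ := fun s => c * (g s - (∑ t : T, g t) / M) with hhdef
  have hmgf : ∑ s : T, Real.exp (4 * ε * h s) ≤ M * Real.exp (2 * ε ^ 2) := by
    have := mgf_bound g hg (4 * ε * c)
    calc ∑ s : T, Real.exp (4 * ε * h s)
        = ∑ s : T, Real.exp ((4 * ε * c) * (g s - (∑ t : T, g t) / M)) := by
          refine Finset.sum_congr rfl fun s _ => ?_
          congr 1
          simp only [hhdef]; ring
      _ ≤ M * Real.exp ((4 * ε * c) ^ 2 / 8) := this
      _ = M * Real.exp (2 * ε ^ 2) := by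
          congr 2
          have : (4 * ε * c) ^ 2 = 16 * ε ^ 2 * c ^ 2 := by ring
          rw [this, hc2]; ring
  have hch := chernoff h (N := N) (4 * ε) ((N : ℝ) * ε) (by positivity)
  have hpow : (∑ s : T, Real.exp (4 * ε * h s)) ^ N ≤ (M * Real.exp (2 * ε ^ 2)) ^ N := by
    refine pow_le_pow_left₀ ?_ hmgf N
    exact Finset.sum_nonneg fun s _ => (Real.exp_pos _).le
  have hkey : ((univ.filter (fun x : Fin N → T =>
      (N : ℝ) * ε ≤ ∑ i, h (x i))).card : ℝ) * Real.exp (4 * ε * ((N:ℝ) * ε)) ≤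
      (M * Real.exp (2 * ε ^ 2)) ^ N := le_trans hch hpow
  have hE : (0:ℝ) < Real.exp (4 * ε * ((N:ℝ) * ε)) := Real.exp_pos _
  rw [← le_div_iff₀ hE] at hkey
  have heq : (M * Real.exp (2 * ε ^ 2)) ^ N / Real.exp (4 * ε * ((N:ℝ) * ε))
      = Real.exp (-(2 * (N:ℝ) * ε ^ 2)) * M ^ N := by
    rw [mul_pow, ← Real.exp_nat_mul, mul_div_assoc, ← Real.exp_sub]
    rw [show (N:ℝ) * (2 * ε ^ 2) - 4 * ε * ((N:ℝ) * ε) = -(2 * (N:ℝ) * ε ^ 2) by ring]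
    ring
  rw [← heq]
  exact hkey

lemma exp_reg_bound {Pp δ : ℝ} (hP : 0 < Pp) (hP1 : Pp ≤ 1) (hδ0 : 0 < δ) (hδ1 : δ < 1) :
    2 * Real.exp (-(-2 * Real.logb 2 Pp + Real.logb 2 (Real.exp 1) + Real.logb 2 (1/δ))) ≤
      δ * Pp := by
  set X : ℝ := -2 * Real.logb 2 Pp + Real.logb 2 (Real.exp 1) + Real.logb 2 (1/δ) with hXdef
  have hlogP : Real.logb 2 Pp ≤ 0 := Real.logb_nonpos (by norm_num) hP.le hP1
  have hloge : 0 ≤ Real.logb 2 (Real.exp 1) :=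
    Real.logb_nonneg (by norm_num) (Real.one_le_exp (by norm_num))
  have hlogd : 0 ≤ Real.logb 2 (1/δ) :=
    Real.logb_nonneg (by norm_num) (one_le_one_div hδ0 hδ1.le)
  have hX0 : 0 ≤ X := by simp only [hXdef]; linarith
  have h2X : Real.exp (-X) ≤ (2:ℝ) ^ (-X) := by
    rw [← Real.exp_one_rpow (-X), Real.rpow_neg (by norm_num : (0:ℝ) ≤ 2),
      Real.rpow_neg (Real.exp_pos 1).le]
    have h1 : (2:ℝ) ^ X ≤ (Real.exp 1) ^ X :=
      Real.rpow_le_rpow (by norm_num) (by nlinarith [Real.exp_one_gt_d9]) hX0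
    have h2 : (0:ℝ) < (2:ℝ) ^ X := Real.rpow_pos_of_pos (by norm_num) X
    exact inv_anti₀ h2 h1
  have hval : (2:ℝ) ^ (-X) = Pp ^ 2 * (Real.exp 1)⁻¹ * δ := by
    have hb0 : (0:ℝ) < 2 := by norm_num
    have hb1 : (2:ℝ) ≠ 1 := by norm_num
    have e1 : (2:ℝ) ^ (Real.logb 2 Pp) = Pp := Real.rpow_logb hb0 hb1 hP
    have e2 : (2:ℝ) ^ (Real.logb 2 (Real.exp 1)) = Real.exp 1 :=
      Real.rpow_logb hb0 hb1 (Real.exp_pos 1)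
    have e3 : (2:ℝ) ^ (Real.logb 2 (1/δ)) = 1/δ :=
      Real.rpow_logb hb0 hb1 (by positivity)
    have : -X = Real.logb 2 Pp + Real.logb 2 Pp +
        (-(Real.logb 2 (Real.exp 1)) + -(Real.logb 2 (1/δ))) := by
      simp only [hXdef]; ring
    rw [this, Real.rpow_add hb0, Real.rpow_add hb0, Real.rpow_add hb0,
      Real.rpow_neg hb0.le, Real.rpow_neg hb0.le, e1, e2, e3]
    rw [one_div, inv_inv]
    ring
  have hE : (0:ℝ) < Real.exp 1 := Real.exp_pos 1
  have hfin : 2 * (Pp ^ 2 * (Real.exp 1)⁻¹ * δ) ≤ δ * Pp := by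
    have h27 : (2.7:ℝ) < Real.exp 1 := by nlinarith [Real.exp_one_gt_d9]
    rw [show 2 * (Pp ^ 2 * (Real.exp 1)⁻¹ * δ) = (2 * Pp ^ 2 * δ) / Real.exp 1 by
      field_simp]
    rw [div_le_iff₀ hE]
    nlinarith [mul_pos hδ0 hP, sq_nonneg Pp, mul_nonneg hδ0.le (sq_nonneg Pp)]
  calc 2 * Real.exp (-X) ≤ 2 * ((2:ℝ) ^ (-X)) := by linarith [h2X]
    _ = 2 * (Pp ^ 2 * (Real.exp 1)⁻¹ * δ) := by rw [hval]
    _ ≤ δ * Pp := hfin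

lemma two_sqrt_div (X : ℝ) (N : ℝ) (hN : 0 < N) :
    2 * Real.sqrt (X / (2 * N)) = Real.sqrt (2 / N) * Real.sqrt X := by
  rw [← Real.sqrt_mul (by positivity : (0:ℝ) ≤ 2 / N)]
  rw [show (2 / N) * X = 4 * (X / (2 * N)) by field_simp; ring]
  rw [show (4:ℝ) = 2 ^ 2 by norm_num, Real.sqrt_mul (by positivity),
    Real.sqrt_sq (by norm_num : (0:ℝ) ≤ 2)]


/-- Non-asymptotic lower bound for description-length regularization (SRM): if `P` is
a full-support pmf on d-policies, `Q` any pmf on d-policies, and `π_SRM` (a function of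
the training draw) maximizes `α_train(π;π*) − reg(π)` over all d-policies, then with
probability at least `1 − δ` over the i.i.d. uniform draw of the training contexts,
`α(π_SRM;π*) ≥ max_π (α(π;π*) − 2 reg(π))
  ≥ E_{π∼Q}[α(π;π*)] − √(2/N) · E_{π∼Q}[√(−2 log₂ P(π) + log₂ e + log₂(1/δ))]`. -/
theorem srm_description_length_lower_bound [Nonempty S]
    (A : S → Finset β) (hA : ∀ s, (A s).Nonempty)
    (πs : ∀ s : S, {a : β // a ∈ A s}) (N : ℕ) (hN : 1 ≤ N)
    (P Q : (∀ s : S, {a : β // a ∈ A s}) → ℝ)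
    (hP0 : ∀ π, 0 < P π) (hP1 : ∑ π : ∀ s : S, {a : β // a ∈ A s}, P π = 1)
    (hQ0 : ∀ π, 0 ≤ Q π) (hQ1 : ∑ π : ∀ s : S, {a : β // a ∈ A s}, Q π = 1)
    (δ : ℝ) (hδ0 : 0 < δ) (hδ1 : δ < 1)
    (πSRM : (Fin N → S) → (∀ s : S, {a : β // a ∈ A s}))
    (hSRM : ∀ shat : Fin N → S, ∀ π : ∀ s : S, {a : β // a ∈ A s},
      trainAccuracy A shat π πs - reg A P δ N π ≤
        trainAccuracy A shat (πSRM shat) πs - reg A P δ N (πSRM shat)) :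
    1 - δ ≤
      (Nat.card {shat : Fin N → S //
          (⨆ π : ∀ s : S, {a : β // a ∈ A s},
              (accuracy A π πs - 2 * reg A P δ N π)) ≤ accuracy A (πSRM shat) πs ∧
          (∑ π : ∀ s : S, {a : β // a ∈ A s}, Q π * accuracy A π πs) -
              Real.sqrt (2 / (N : ℝ)) *
                (∑ π : ∀ s : S, {a : β // a ∈ A s},
                  Q π * Real.sqrt (-2 * Real.logb 2 (P π) + Real.logb 2 (Real.exp 1) +
                    Real.logb 2 (1 / δ))) ≤
            ⨆ π : ∀ s : S, {a : β // a ∈ A s},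
              (accuracy A π πs - 2 * reg A P δ N π)} : ℝ) /
        ((Fintype.card S : ℝ) ^ N) := by
  classical
  haveI hne : Nonempty (∀ s : S, {a : β // a ∈ A s}) :=
    ⟨fun s => ⟨(hA s).choose, (hA s).choose_spec⟩⟩
  have hNpos : (0:ℝ) < (N:ℝ) := by exact_mod_cast hN
  have hM : (0:ℝ) < (Fintype.card S : ℝ) := by exact_mod_cast Fintype.card_pos
  -- basic facts about reg
  have hPle1 : ∀ π : ∀ s : S, {a : β // a ∈ A s}, P π ≤ 1 := fun π => by
    rw [← hP1]
    exact Finset.single_le_sum (fun π' _ => (hP0 π').le) (Finset.mem_univ π)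
  have hX0 : ∀ π : ∀ s : S, {a : β // a ∈ A s},
      0 ≤ -2 * Real.logb 2 (P π) + Real.logb 2 (Real.exp 1) + Real.logb 2 (1/δ) := by
    intro π
    have h1 : Real.logb 2 (P π) ≤ 0 := Real.logb_nonpos (by norm_num) (hP0 π).le (hPle1 π)
    have h2 : 0 ≤ Real.logb 2 (Real.exp 1) :=
      Real.logb_nonneg (by norm_num) (Real.one_le_exp (by norm_num))
    have h3 : 0 ≤ Real.logb 2 (1/δ) :=
      Real.logb_nonneg (by norm_num) (one_le_one_div hδ0 hδ1.le)
    linarith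
  have hreg0 : ∀ π : ∀ s : S, {a : β // a ∈ A s}, 0 ≤ reg A P δ N π :=
    fun π => Real.sqrt_nonneg _
  have hregsq : ∀ π : ∀ s : S, {a : β // a ∈ A s},
      2 * (N:ℝ) * (reg A P δ N π) ^ 2 =
        -2 * Real.logb 2 (P π) + Real.logb 2 (Real.exp 1) + Real.logb 2 (1/δ) := by
    intro π
    rw [reg, Real.sq_sqrt (div_nonneg (hX0 π) (by positivity))]
    field_simp
  have h2reg : ∀ π : ∀ s : S, {a : β // a ∈ A s},
      2 * reg A P δ N π = Real.sqrt (2/(N:ℝ)) *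
        Real.sqrt (-2 * Real.logb 2 (P π) + Real.logb 2 (Real.exp 1) + Real.logb 2 (1/δ)) :=
    fun π => two_sqrt_div _ _ hNpos
  -- sup facts
  have hbdd : BddAbove (Set.range fun π : ∀ s : S, {a : β // a ∈ A s} =>
      accuracy A π πs - 2 * reg A P δ N π) :=
    Set.Finite.bddAbove (Set.finite_range _)
  -- the deterministic second inequality
  have hsecond : (∑ π : ∀ s : S, {a : β // a ∈ A s}, Q π * accuracy A π πs) -
      Real.sqrt (2 / (N : ℝ)) *
        (∑ π : ∀ s : S, {a : β // a ∈ A s},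
          Q π * Real.sqrt (-2 * Real.logb 2 (P π) + Real.logb 2 (Real.exp 1) +
            Real.logb 2 (1 / δ))) ≤
      ⨆ π : ∀ s : S, {a : β // a ∈ A s}, (accuracy A π πs - 2 * reg A P δ N π) := by
    have h1 : (∑ π : ∀ s : S, {a : β // a ∈ A s}, Q π * accuracy A π πs) -
        Real.sqrt (2 / (N : ℝ)) *
          (∑ π : ∀ s : S, {a : β // a ∈ A s},
            Q π * Real.sqrt (-2 * Real.logb 2 (P π) + Real.logb 2 (Real.exp 1) +
              Real.logb 2 (1 / δ))) =
        ∑ π : ∀ s : S, {a : β // a ∈ A s}, Q π * (accuracy A π πs - 2 * reg A P δ N π) := by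
      rw [Finset.mul_sum, ← Finset.sum_sub_distrib]
      refine Finset.sum_congr rfl fun π _ => ?_
      rw [mul_sub, h2reg π]
      ring
    rw [h1]
    calc ∑ π : ∀ s : S, {a : β // a ∈ A s}, Q π * (accuracy A π πs - 2 * reg A P δ N π)
        ≤ ∑ π : ∀ s : S, {a : β // a ∈ A s}, Q π *
            (⨆ π' : ∀ s : S, {a : β // a ∈ A s}, (accuracy A π' πs - 2 * reg A P δ N π')) :=
          Finset.sum_le_sum fun π _ =>
            mul_le_mul_of_nonneg_left (le_ciSup hbdd π) (hQ0 π)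
      _ = _ := by rw [← Finset.sum_mul, hQ1, one_mul]
  -- the good event
  set Ev : (Fin N → S) → Prop := fun shat =>
    (⨆ π : ∀ s : S, {a : β // a ∈ A s},
        (accuracy A π πs - 2 * reg A P δ N π)) ≤ accuracy A (πSRM shat) πs ∧
    (∑ π : ∀ s : S, {a : β // a ∈ A s}, Q π * accuracy A π πs) -
        Real.sqrt (2 / (N : ℝ)) *
          (∑ π : ∀ s : S, {a : β // a ∈ A s},
            Q π * Real.sqrt (-2 * Real.logb 2 (P π) + Real.logb 2 (Real.exp 1) +
              Real.logb 2 (1 / δ))) ≤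
      ⨆ π : ∀ s : S, {a : β // a ∈ A s},
        (accuracy A π πs - 2 * reg A P δ N π) with hEv
  have hGoodEv : ∀ shat : Fin N → S,
      (∀ π : ∀ s : S, {a : β // a ∈ A s},
        |accuracy A π πs - trainAccuracy A shat π πs| ≤ reg A P δ N π) → Ev shat := by
    intro shat hG
    constructor
    · refine ciSup_le fun π => ?_
      have h1 := abs_le.1 (hG π)
      have h2 := abs_le.1 (hG (πSRM shat))
      have h3 := hSRM shat π
      linarith [h1.1, h1.2, h2.1, h2.2]
    · exact hsecond
  -- cardinality bound for the good set
  have hGoodcard : (1 - δ) * (Fintype.card S : ℝ) ^ N ≤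
      ((univ.filter (fun shat : Fin N → S =>
        ∀ π : ∀ s : S, {a : β // a ∈ A s},
          |accuracy A π πs - trainAccuracy A shat π πs| ≤ reg A P δ N π)).card : ℝ) := by
    classical
    have hNpos : (0:ℝ) < (N:ℝ) := by exact_mod_cast hN
    have hM : (0:ℝ) < (Fintype.card S : ℝ) := by exact_mod_cast Fintype.card_pos
    set bad : ℝ → (∀ s : S, {a : β // a ∈ A s}) → Finset (Fin N → S) := fun c π =>
      univ.filter (fun x : Fin N → S =>
        (N : ℝ) * reg A P δ N π ≤ ∑ i, c * ((if π (x i) = πs (x i) then (1:ℝ) else 0) -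
          (∑ t : S, if π t = πs t then (1:ℝ) else 0) / (Fintype.card S : ℝ))) with hbad
    -- split
    have hsplit : ((univ.filter (fun shat : Fin N → S =>
          ∀ π : ∀ s : S, {a : β // a ∈ A s},
            |accuracy A π πs - trainAccuracy A shat π πs| ≤ reg A P δ N π)).card : ℝ) +
        ((univ.filter (fun shat : Fin N → S =>
          ¬ ∀ π : ∀ s : S, {a : β // a ∈ A s},
            |accuracy A π πs - trainAccuracy A shat π πs| ≤ reg A P δ N π)).card : ℝ) =
        (Fintype.card S : ℝ) ^ N := by
      have h1 := Finset.card_filter_add_card_filter_not (s := (univ : Finset (Fin N → S)))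
        (p := fun shat : Fin N → S =>
          ∀ π : ∀ s : S, {a : β // a ∈ A s},
            |accuracy A π πs - trainAccuracy A shat π πs| ≤ reg A P δ N π)
      have h2 : (univ : Finset (Fin N → S)).card = (Fintype.card S) ^ N := by
        rw [Finset.card_univ, Fintype.card_fun, Fintype.card_fin]
      rw [h2] at h1
      exact_mod_cast h1
    -- bad subset
    have hBadsub : (univ.filter (fun shat : Fin N → S =>
          ¬ ∀ π : ∀ s : S, {a : β // a ∈ A s},
            |accuracy A π πs - trainAccuracy A shat π πs| ≤ reg A P δ N π)) ⊆
        univ.biUnion (fun π : ∀ s : S, {a : β // a ∈ A s} => bad 1 π ∪ bad (-1) π) := by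
      intro x hx
      rw [Finset.mem_filter] at hx
      obtain ⟨π, hπ⟩ := not_forall.1 hx.2
      rw [not_le] at hπ
      refine Finset.mem_biUnion.2 ⟨π, Finset.mem_univ π, ?_⟩
      rw [Finset.mem_union]
      simp only [hbad, Finset.mem_filter, Finset.mem_univ, true_and]
      have hsumc : ∀ c : ℝ, ∑ i : Fin N, c * ((if π (x i) = πs (x i) then (1:ℝ) else 0) -
          (∑ t : S, if π t = πs t then (1:ℝ) else 0) / (Fintype.card S : ℝ)) =
          c * ((∑ i : Fin N, if π (x i) = πs (x i) then (1:ℝ) else 0) -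
            (N:ℝ) * ((∑ t : S, if π t = πs t then (1:ℝ) else 0) / (Fintype.card S : ℝ))) := by
        intro c
        rw [← Finset.mul_sum, Finset.sum_sub_distrib, Finset.sum_const, Finset.card_univ,
          Fintype.card_fin, nsmul_eq_mul]
      have hTN : (N:ℝ) * ((∑ i : Fin N, if π (x i) = πs (x i) then (1:ℝ) else 0) / (N:ℝ)) =
          ∑ i : Fin N, if π (x i) = πs (x i) then (1:ℝ) else 0 := by
        field_simp
      rw [accuracy, trainAccuracy] at hπ
      rcases lt_abs.1 hπ with h | h
      · -- acc - train > reg : sum of (μ - g) large : c = -1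
        refine Or.inr ?_
        rw [hsumc]
        have h2 := mul_lt_mul_of_pos_left h hNpos
        rw [mul_sub, hTN] at h2
        linarith
      · refine Or.inl ?_
        rw [hsumc]
        rw [neg_sub] at h
        have h2 := mul_lt_mul_of_pos_left h hNpos
        rw [mul_sub, hTN] at h2
        linarith
    -- per-policy card bound
    have hδP : ∀ π : ∀ s : S, {a : β // a ∈ A s},
        ((bad 1 π).card : ℝ) + ((bad (-1) π).card : ℝ) ≤
          δ * P π * (Fintype.card S : ℝ) ^ N := by
      intro π
      have hg : ∀ s : S, (if π s = πs s then (1:ℝ) else 0) = 0 ∨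
          (if π s = πs s then (1:ℝ) else 0) = 1 := by
        intro s; by_cases h : π s = πs s <;> simp [h]
      have h1 := tail_count (N := N) (fun s => if π s = πs s then (1:ℝ) else 0) hg
        (reg A P δ N π) (hreg0 π) 1 (Or.inl rfl)
      have h2 := tail_count (N := N) (fun s => if π s = πs s then (1:ℝ) else 0) hg
        (reg A P δ N π) (hreg0 π) (-1) (Or.inr rfl)
      have h3 : Real.exp (-(2 * (N:ℝ) * (reg A P δ N π) ^ 2)) =
          Real.exp (-(-2 * Real.logb 2 (P π) + Real.logb 2 (Real.exp 1) + Real.logb 2 (1/δ))) := by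
        rw [hregsq π]
      have h4 := exp_reg_bound (hP0 π) (hPle1 π) hδ0 hδ1
      rw [h3] at h1 h2
      have h5 : (0:ℝ) < (Fintype.card S : ℝ) ^ N := by positivity
      have hb1 : ((bad 1 π).card : ℝ) ≤ Real.exp (-(-2 * Real.logb 2 (P π) +
          Real.logb 2 (Real.exp 1) + Real.logb 2 (1/δ))) * (Fintype.card S : ℝ) ^ N := h1
      have hb2 : ((bad (-1) π).card : ℝ) ≤ Real.exp (-(-2 * Real.logb 2 (P π) +
          Real.logb 2 (Real.exp 1) + Real.logb 2 (1/δ))) * (Fintype.card S : ℝ) ^ N := h2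
      nlinarith [h5]
    -- total bad bound
    have hBadcard : ((univ.filter (fun shat : Fin N → S =>
          ¬ ∀ π : ∀ s : S, {a : β // a ∈ A s},
            |accuracy A π πs - trainAccuracy A shat π πs| ≤ reg A P δ N π)).card : ℝ) ≤
        δ * (Fintype.card S : ℝ) ^ N := by
      have h1 := Finset.card_le_card hBadsub
      have h2 := Finset.card_biUnion_le (s := (univ : Finset (∀ s : S, {a : β // a ∈ A s})))
        (t := fun π => bad 1 π ∪ bad (-1) π)
      have h3 : ((univ.biUnion (fun π : ∀ s : S, {a : β // a ∈ A s} =>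
          bad 1 π ∪ bad (-1) π)).card : ℝ) ≤
          ∑ π : ∀ s : S, {a : β // a ∈ A s}, (((bad 1 π).card : ℝ) + ((bad (-1) π).card : ℝ)) := by
        calc ((univ.biUnion _).card : ℝ) ≤
            ((∑ π : ∀ s : S, {a : β // a ∈ A s}, (bad 1 π ∪ bad (-1) π).card : ℕ) : ℝ) := by
              exact_mod_cast h2
          _ ≤ _ := by
              push_cast
              refine Finset.sum_le_sum fun π _ => ?_
              exact_mod_cast Finset.card_union_le _ _
      calc ((univ.filter _).card : ℝ) ≤ ((univ.biUnion (fun π : ∀ s : S, {a : β // a ∈ A s} =>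
            bad 1 π ∪ bad (-1) π)).card : ℝ) := by exact_mod_cast h1
        _ ≤ ∑ π : ∀ s : S, {a : β // a ∈ A s}, (((bad 1 π).card : ℝ) + ((bad (-1) π).card : ℝ)) := h3
        _ ≤ ∑ π : ∀ s : S, {a : β // a ∈ A s}, δ * P π * (Fintype.card S : ℝ) ^ N :=
            Finset.sum_le_sum fun π _ => hδP π
        _ = δ * (Fintype.card S : ℝ) ^ N := by
            rw [← Finset.sum_mul, ← Finset.mul_sum, hP1, mul_one]
    linarith
  -- conclusion
  have hcardEv : ((univ.filter (fun shat : Fin N → S =>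
        ∀ π : ∀ s : S, {a : β // a ∈ A s},
          |accuracy A π πs - trainAccuracy A shat π πs| ≤ reg A P δ N π)).card : ℝ) ≤
      (Nat.card {shat : Fin N → S // Ev shat} : ℝ) := by
    have h1 : Nat.card {shat : Fin N → S // Ev shat} = (univ.filter Ev).card := by
      rw [Nat.card_eq_fintype_card, Fintype.card_subtype]
    rw [h1]
    have h2 : (univ.filter (fun shat : Fin N → S =>
        ∀ π : ∀ s : S, {a : β // a ∈ A s},
          |accuracy A π πs - trainAccuracy A shat π πs| ≤ reg A P δ N π)) ⊆
        univ.filter Ev := by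
      intro x hx
      rw [Finset.mem_filter] at hx ⊢
      exact ⟨hx.1, hGoodEv x hx.2⟩
    exact_mod_cast Finset.card_le_card h2
  rw [le_div_iff₀ (by positivity)]
  calc (1 - δ) * (Fintype.card S : ℝ) ^ N ≤ _ := hGoodcard
    _ ≤ _ := hcardEv
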